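/- The numerical semigroup Γ generated by 8, 28 and 73 satisfies the semigroup distribution property for d = 17: for every integer l ≥ 1 the half-open interval (17(l − 1), 17l] contains exactly min(l + 1, 17) elements of Γ. -/
import Mathlib


/-- `Γ` satisfies the semigroup distribution property for `d`: for every
`l ≥ 1` the half-open interval `((l−1)d, ld]` contains exactly
`min (l+1) d` elements of `Γ`. -/
def SemigroupDistributionProperty (Γ : Set ℕ) (d : ℕ) : Prop :=
  ∀ l : ℕ, 1 ≤ l →
    {k : ℕ | k ∈ Γ ∧ (l - 1) * d < k ∧ k ≤ l * d}.ncard = min (l + 1) d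

/-- Decidable characterization of membership in `⟨8, 28, 73⟩`, using
`2·28 ≡ 0 (mod 8)` and `8·73 ≡ 0 (mod 8)` to bound the search. -/
def P (k : ℕ) : Prop := ∃ z, z < 8 ∧ ∃ y, y < 2 ∧ 28*y + 73*z ≤ k ∧ (k - 28*y - 73*z) % 8 = 0

instance : DecidablePred P := fun k => by unfold P; infer_instance

lemma mem_iff_P (k : ℕ) : (∃ x y z : ℕ, k = x * 8 + y * 28 + z * 73) ↔ P k := by
  constructor
  · rintro ⟨x, y, z, rfl⟩
    exact ⟨z % 8, by omega, y % 2, by omega, by omega, by omega⟩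
  · rintro ⟨z, hz, y, hy, h1, h2⟩
    exact ⟨(k - 28*y - 73*z)/8, y, z, by omega⟩

/-- The Frobenius number of `⟨8, 28, 73⟩` is `239`: every `k ≥ 240` belongs. -/
lemma mem_of_ge (k : ℕ) (h : 240 ≤ k) : P k := by
  induction k using Nat.strong_induction_on with
  | _ k ih =>
    by_cases hk : k ≤ 247
    · interval_cases k <;> decide
    · obtain ⟨z, hz, y, hy, h1, h2⟩ := ih (k - 8) (by omega) (by omega)
      exact ⟨z, hz, y, hy, by omega, by omega⟩

lemma ncard_eq (a b : ℕ) :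
    {k : ℕ | (∃ x y z : ℕ, k = x * 8 + y * 28 + z * 73) ∧ a < k ∧ k ≤ b}.ncard
      = ((Finset.Ioc a b).filter P).card := by
  rw [← Set.ncard_coe_finset]
  congr 1
  ext k
  simp [mem_iff_P, and_comm]

/-- The key claim of the counterexample to `Conjecture C`: the semigroup
`⟨8, 28, 73⟩` satisfies the semigroup distribution property for `d = 17`. -/
theorem distribution_property_8_28_73 :
    SemigroupDistributionProperty
      {n : ℕ | ∃ x y z : ℕ, n = x * 8 + y * 28 + z * 73} 17 := by
  intro l hl
  have key : {k : ℕ | k ∈ {n : ℕ | ∃ x y z : ℕ, n = x * 8 + y * 28 + z * 73} ∧ (l-1) * 17 < k ∧ k ≤ l * 17}.ncard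
      = ((Finset.Ioc ((l-1)*17) (l*17)).filter P).card := ncard_eq _ _
  rw [key]
  rcases le_or_gt l 15 with h | h
  · interval_cases l <;> decide
  · rw [Finset.filter_true_of_mem, Nat.card_Ioc]
    · omega
    · intro k hk
      simp only [Finset.mem_Ioc] at hk
      exact mem_of_ge k (by omega)
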